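/- Let H, H₁ be complex Hilbert spaces, p > 0, C₀ ≥ 0, and let B, B′ : H → H₁ be compact operators. If s_j(B) j^{1/p} → C₀ and s_j(B′) j^{1/p} → 0 as j → ∞, then s_j(B + B′) j^{1/p} → C₀ as j → ∞. -/
import Mathlib


open Filter
open scoped Topology

noncomputable section

/-- The `j`-th singular value (approximation number) of a bounded operator between
Hilbert spaces: `s_j(B) = inf{‖B − F‖ : F of rank < j}`. -/
def sNum {H H₁ : Type*} [NormedAddCommGroup H] [InnerProductSpace ℂ H]
    [NormedAddCommGroup H₁] [InnerProductSpace ℂ H₁] (B : H →L[ℂ] H₁) (j : ℕ) : ℝ :=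
  sInf {r : ℝ | ∃ F : H →L[ℂ] H₁,
    Module.rank ℂ (LinearMap.range (F : H →ₗ[ℂ] H₁)) < (j : Cardinal) ∧ ‖B - F‖ = r}


section Aux

variable {H H₁ : Type*} [NormedAddCommGroup H] [InnerProductSpace ℂ H]
  [NormedAddCommGroup H₁] [InnerProductSpace ℂ H₁]

lemma sNumSet_bddBelow (B : H →L[ℂ] H₁) (j : ℕ) :
    BddBelow {r : ℝ | ∃ F : H →L[ℂ] H₁,
      Module.rank ℂ (LinearMap.range (F : H →ₗ[ℂ] H₁)) < (j : Cardinal) ∧ ‖B - F‖ = r} :=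
  ⟨0, fun _ ⟨_, _, hF⟩ => hF ▸ norm_nonneg _⟩

lemma sNum_nonneg (B : H →L[ℂ] H₁) (j : ℕ) : 0 ≤ sNum B j :=
  Real.sInf_nonneg fun _ ⟨_, _, hF⟩ => hF ▸ norm_nonneg _

lemma sNum_le_norm (B F : H →L[ℂ] H₁) {j : ℕ}
    (h : Module.rank ℂ (LinearMap.range (F : H →ₗ[ℂ] H₁)) < (j : Cardinal)) :
    sNum B j ≤ ‖B - F‖ :=
  csInf_le (sNumSet_bddBelow B j) ⟨F, h, rfl⟩

lemma sNum_exists_lt (B : H →L[ℂ] H₁) (j : ℕ) {ε : ℝ} (hε : 0 < ε) :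
    ∃ F : H →L[ℂ] H₁,
      Module.rank ℂ (LinearMap.range (F : H →ₗ[ℂ] H₁)) < ((j + 1 : ℕ) : Cardinal) ∧
      ‖B - F‖ < sNum B (j + 1) + ε := by
  have hne : {r : ℝ | ∃ F : H →L[ℂ] H₁,
      Module.rank ℂ (LinearMap.range (F : H →ₗ[ℂ] H₁)) < ((j + 1 : ℕ) : Cardinal) ∧
      ‖B - F‖ = r}.Nonempty := by
    refine ⟨‖B - 0‖, 0, ?_, rfl⟩
    have h0 : ((0 : H →L[ℂ] H₁) : H →ₗ[ℂ] H₁) = 0 := rfl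
    rw [h0, LinearMap.range_zero, rank_bot]
    exact_mod_cast Nat.succ_pos j
  have h := (csInf_lt_iff (sNumSet_bddBelow B (j + 1)) hne).1
    (lt_add_of_pos_right _ hε)
  obtain ⟨r, ⟨F, hF, hr⟩, hlt⟩ := h
  exact ⟨F, hF, hr ▸ hlt⟩

lemma sNum_neg (B : H →L[ℂ] H₁) (j : ℕ) : sNum (-B) j = sNum B j := by
  unfold sNum
  congr 1
  ext r
  constructor
  · rintro ⟨F, hF, rfl⟩
    refine ⟨-F, ?_, ?_⟩
    · have hc : ((-F : H →L[ℂ] H₁) : H →ₗ[ℂ] H₁) = -(F : H →ₗ[ℂ] H₁) := rfl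
      rw [hc, LinearMap.range_neg]
      exact hF
    · rw [show -B - F = -(B - -F) by abel, norm_neg]
  · rintro ⟨F, hF, rfl⟩
    refine ⟨-F, ?_, ?_⟩
    · have hc : ((-F : H →L[ℂ] H₁) : H →ₗ[ℂ] H₁) = -(F : H →ₗ[ℂ] H₁) := rfl
      rw [hc, LinearMap.range_neg]
      exact hF
    · rw [show -B - -F = -(B - F) by abel, norm_neg]

lemma sNum_add_le (A B : H →L[ℂ] H₁) (j k : ℕ) :
    sNum (A + B) (j + k + 1) ≤ sNum A (j + 1) + sNum B (k + 1) := by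
  refine le_of_forall_pos_le_add fun ε hε => ?_
  obtain ⟨F, hF, hFn⟩ := sNum_exists_lt A j (half_pos hε)
  obtain ⟨G, hG, hGn⟩ := sNum_exists_lt B k (half_pos hε)
  have hrank : Module.rank ℂ (LinearMap.range ((F + G : H →L[ℂ] H₁) : H →ₗ[ℂ] H₁)) <
      ((j + k + 1 : ℕ) : Cardinal) := by
    have h1 : Module.rank ℂ (LinearMap.range (F : H →ₗ[ℂ] H₁)) ≤ (j : Cardinal) :=
      Order.lt_succ_iff.1 (by rw [← Cardinal.nat_succ]; exact_mod_cast hF)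
    have h2 : Module.rank ℂ (LinearMap.range (G : H →ₗ[ℂ] H₁)) ≤ (k : Cardinal) :=
      Order.lt_succ_iff.1 (by rw [← Cardinal.nat_succ]; exact_mod_cast hG)
    calc Module.rank ℂ (LinearMap.range ((F + G : H →L[ℂ] H₁) : H →ₗ[ℂ] H₁))
        ≤ Module.rank ℂ (LinearMap.range (F : H →ₗ[ℂ] H₁)) +
          Module.rank ℂ (LinearMap.range (G : H →ₗ[ℂ] H₁)) := by
          rw [ContinuousLinearMap.coe_add]
          exact LinearMap.rank_add_le _ _
      _ ≤ (j : Cardinal) + (k : Cardinal) := add_le_add h1 h2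
      _ < ((j + k + 1 : ℕ) : Cardinal) := by
          rw [← Nat.cast_add]
          exact_mod_cast Nat.lt_succ_self (j + k)
  calc sNum (A + B) (j + k + 1) ≤ ‖(A + B) - (F + G)‖ := sNum_le_norm _ _ hrank
    _ ≤ ‖A - F‖ + ‖B - G‖ := by
        rw [show (A + B) - (F + G) = (A - F) + (B - G) by abel]
        exact norm_add_le _ _
    _ ≤ sNum A (j + 1) + sNum B (k + 1) + ε := by linarith

lemma key_upper (B B' : H →L[ℂ] H₁) {n k : ℕ} (hk : k + 1 ≤ n) :
    sNum (B + B') n ≤ sNum B (n - k) + sNum B' (k + 1) := by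
  simpa [show n - k - 1 + k + 1 = n from by omega,
    show n - k - 1 + 1 = n - k from by omega] using sNum_add_le B B' (n - k - 1) k

lemma key_lower (B B' : H →L[ℂ] H₁) {n : ℕ} (k : ℕ) (hn : 1 ≤ n) :
    sNum B (n + k) ≤ sNum (B + B') n + sNum B' (k + 1) := by
  have h := sNum_add_le (B + B') (-B') (n - 1) k
  rw [sNum_neg] at h
  rw [show B + B' + -B' = B from by abel] at h
  simpa [show n - 1 + k + 1 = n + k from by omega,
    show n - 1 + 1 = n from by omega] using h

lemma eventual_upper (B B' : H →L[ℂ] H₁) {p C₀ : ℝ} (hp : 0 < p)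
    (h1 : Filter.Tendsto (fun j : ℕ => sNum B j * (j : ℝ) ^ (1 / p)) Filter.atTop (nhds C₀))
    (h2 : Filter.Tendsto (fun j : ℕ => sNum B' j * (j : ℝ) ^ (1 / p)) Filter.atTop (nhds 0))
    {ε : ℝ} (hε0 : 0 < ε) (hε1 : ε < 1) {δ : ℝ} (hδ : 0 < δ) :
    ∀ᶠ n : ℕ in Filter.atTop,
      sNum (B + B') n * (n : ℝ) ^ (1 / p) ≤ (C₀ + δ) / (1 - ε) ^ (1 / p) + δ / ε ^ (1 / p) := by
  obtain ⟨N₁, hN₁⟩ := Metric.tendsto_atTop.1 h1 δ hδ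
  obtain ⟨N₂, hN₂⟩ := Metric.tendsto_atTop.1 h2 δ hδ
  have hnat : Filter.Tendsto (fun n : ℕ => (n : ℝ)) Filter.atTop Filter.atTop :=
    tendsto_natCast_atTop_atTop
  have hT1 : Filter.Tendsto (fun n : ℕ => (1 - ε) * (n : ℝ)) Filter.atTop Filter.atTop :=
    hnat.const_mul_atTop (by linarith)
  have hT2 : Filter.Tendsto (fun n : ℕ => ε * (n : ℝ)) Filter.atTop Filter.atTop :=
    hnat.const_mul_atTop hε0
  filter_upwards [Filter.eventually_ge_atTop 1, hT1.eventually_ge_atTop (N₁ : ℝ),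
    hT2.eventually_ge_atTop (N₂ : ℝ)] with n h1n h2n h3n
  set k := ⌊ε * (n : ℝ)⌋₊ with hkdef
  have hnpos : (0 : ℝ) < n := by exact_mod_cast h1n
  have hkle : (k : ℝ) ≤ ε * n := Nat.floor_le (by positivity)
  have hkltn : k < n := by
    have : (k : ℝ) < n := lt_of_le_of_lt hkle (by nlinarith)
    exact_mod_cast this
  have hcast : ((n - k : ℕ) : ℝ) = (n : ℝ) - k := by
    rw [Nat.cast_sub hkltn.le]
  have hεk1 : ε * n ≤ (k : ℝ) + 1 := (Nat.lt_floor_add_one _).le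
  have hidx1 : N₁ ≤ n - k := by
    have : (N₁ : ℝ) ≤ ((n - k : ℕ) : ℝ) := by rw [hcast]; linarith
    exact_mod_cast this
  have hidx2 : N₂ ≤ k + 1 := by
    have : (N₂ : ℝ) ≤ ((k + 1 : ℕ) : ℝ) := by push_cast; linarith
    exact_mod_cast this
  have hd1 := hN₁ (n - k) hidx1
  have hd2 := hN₂ (k + 1) hidx2
  rw [Real.dist_eq] at hd1 hd2
  rw [sub_zero] at hd2
  have hA : sNum B (n - k) * ((n - k : ℕ) : ℝ) ^ (1 / p) ≤ C₀ + δ := by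
    have := (abs_lt.1 hd1).2; linarith
  have hb : sNum B' (k + 1) * ((k + 1 : ℕ) : ℝ) ^ (1 / p) ≤ δ := by
    have := (abs_lt.1 hd2).2; linarith
  have h1me : (0 : ℝ) < 1 - ε := by linarith
  have hp1 : (0 : ℝ) ≤ 1 / p := by positivity
  have hr1 : (1 - ε) ^ (1 / p) * (n : ℝ) ^ (1 / p) ≤ ((n - k : ℕ) : ℝ) ^ (1 / p) := by
    rw [← Real.mul_rpow h1me.le hnpos.le]
    exact Real.rpow_le_rpow (by positivity) (by rw [hcast]; linarith) hp1
  have hr2 : ε ^ (1 / p) * (n : ℝ) ^ (1 / p) ≤ ((k + 1 : ℕ) : ℝ) ^ (1 / p) := by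
    rw [← Real.mul_rpow hε0.le hnpos.le]
    exact Real.rpow_le_rpow (by positivity) (by push_cast; linarith) hp1
  have hA1 : (0 : ℝ) < (1 - ε) ^ (1 / p) := Real.rpow_pos_of_pos h1me _
  have hB1 : (0 : ℝ) < ε ^ (1 / p) := Real.rpow_pos_of_pos hε0 _
  have hs1 : 0 ≤ sNum B (n - k) := sNum_nonneg _ _
  have hs2 : 0 ≤ sNum B' (k + 1) := sNum_nonneg _ _
  have hsub : sNum (B + B') n ≤ sNum B (n - k) + sNum B' (k + 1) := key_upper B B' hkltn
  have t1 : sNum B (n - k) * (n : ℝ) ^ (1 / p) ≤ (C₀ + δ) / (1 - ε) ^ (1 / p) := by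
    rw [le_div_iff₀ hA1]
    calc sNum B (n - k) * (n : ℝ) ^ (1 / p) * (1 - ε) ^ (1 / p)
        = sNum B (n - k) * ((1 - ε) ^ (1 / p) * (n : ℝ) ^ (1 / p)) := by ring
      _ ≤ sNum B (n - k) * ((n - k : ℕ) : ℝ) ^ (1 / p) := mul_le_mul_of_nonneg_left hr1 hs1
      _ ≤ C₀ + δ := hA
  have t2 : sNum B' (k + 1) * (n : ℝ) ^ (1 / p) ≤ δ / ε ^ (1 / p) := by
    rw [le_div_iff₀ hB1]
    calc sNum B' (k + 1) * (n : ℝ) ^ (1 / p) * ε ^ (1 / p)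
        = sNum B' (k + 1) * (ε ^ (1 / p) * (n : ℝ) ^ (1 / p)) := by ring
      _ ≤ sNum B' (k + 1) * ((k + 1 : ℕ) : ℝ) ^ (1 / p) := mul_le_mul_of_nonneg_left hr2 hs2
      _ ≤ δ := hb
  calc sNum (B + B') n * (n : ℝ) ^ (1 / p)
      ≤ (sNum B (n - k) + sNum B' (k + 1)) * (n : ℝ) ^ (1 / p) :=
        mul_le_mul_of_nonneg_right hsub (by positivity)
    _ = sNum B (n - k) * (n : ℝ) ^ (1 / p) + sNum B' (k + 1) * (n : ℝ) ^ (1 / p) := by ring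
    _ ≤ (C₀ + δ) / (1 - ε) ^ (1 / p) + δ / ε ^ (1 / p) := add_le_add t1 t2

lemma eventual_lower (B B' : H →L[ℂ] H₁) {p C₀ : ℝ} (hp : 0 < p)
    (h1 : Filter.Tendsto (fun j : ℕ => sNum B j * (j : ℝ) ^ (1 / p)) Filter.atTop (nhds C₀))
    (h2 : Filter.Tendsto (fun j : ℕ => sNum B' j * (j : ℝ) ^ (1 / p)) Filter.atTop (nhds 0))
    {ε : ℝ} (hε0 : 0 < ε) {δ : ℝ} (hδ : 0 < δ) :
    ∀ᶠ n : ℕ in Filter.atTop,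
      (C₀ - δ) / (1 + ε) ^ (1 / p) - δ / ε ^ (1 / p) ≤ sNum (B + B') n * (n : ℝ) ^ (1 / p) := by
  obtain ⟨N₁, hN₁⟩ := Metric.tendsto_atTop.1 h1 δ hδ
  obtain ⟨N₂, hN₂⟩ := Metric.tendsto_atTop.1 h2 δ hδ
  have hnat : Filter.Tendsto (fun n : ℕ => (n : ℝ)) Filter.atTop Filter.atTop :=
    tendsto_natCast_atTop_atTop
  have hT2 : Filter.Tendsto (fun n : ℕ => ε * (n : ℝ)) Filter.atTop Filter.atTop :=
    hnat.const_mul_atTop hε0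
  filter_upwards [Filter.eventually_ge_atTop 1, Filter.eventually_ge_atTop N₁,
    hT2.eventually_ge_atTop (N₂ : ℝ)] with n h1n h2n h3n
  set k := ⌊ε * (n : ℝ)⌋₊ with hkdef
  have hnpos : (0 : ℝ) < n := by exact_mod_cast h1n
  have hkle : (k : ℝ) ≤ ε * n := Nat.floor_le (by positivity)
  have hεk1 : ε * n ≤ (k : ℝ) + 1 := (Nat.lt_floor_add_one _).le
  have hidx1 : N₁ ≤ n + k := le_trans h2n (Nat.le_add_right _ _)
  have hidx2 : N₂ ≤ k + 1 := by
    have : (N₂ : ℝ) ≤ ((k + 1 : ℕ) : ℝ) := by push_cast; linarith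
    exact_mod_cast this
  have hd1 := hN₁ (n + k) hidx1
  have hd2 := hN₂ (k + 1) hidx2
  rw [Real.dist_eq] at hd1 hd2
  rw [sub_zero] at hd2
  have hA : C₀ - δ ≤ sNum B (n + k) * ((n + k : ℕ) : ℝ) ^ (1 / p) := by
    have := (abs_lt.1 hd1).1; linarith
  have hb : sNum B' (k + 1) * ((k + 1 : ℕ) : ℝ) ^ (1 / p) ≤ δ := by
    have := (abs_lt.1 hd2).2; linarith
  have hp1 : (0 : ℝ) ≤ 1 / p := by positivity
  have h1e : (0 : ℝ) < 1 + ε := by linarith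
  have hr3 : ((n + k : ℕ) : ℝ) ^ (1 / p) ≤ (1 + ε) ^ (1 / p) * (n : ℝ) ^ (1 / p) := by
    rw [← Real.mul_rpow h1e.le hnpos.le]
    exact Real.rpow_le_rpow (by positivity) (by push_cast; nlinarith) hp1
  have hr2 : ε ^ (1 / p) * (n : ℝ) ^ (1 / p) ≤ ((k + 1 : ℕ) : ℝ) ^ (1 / p) := by
    rw [← Real.mul_rpow hε0.le hnpos.le]
    exact Real.rpow_le_rpow (by positivity) (by push_cast; linarith) hp1
  have hA1 : (0 : ℝ) < (1 + ε) ^ (1 / p) := Real.rpow_pos_of_pos h1e _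
  have hB1 : (0 : ℝ) < ε ^ (1 / p) := Real.rpow_pos_of_pos hε0 _
  have hs1 : 0 ≤ sNum B (n + k) := sNum_nonneg _ _
  have hs2 : 0 ≤ sNum B' (k + 1) := sNum_nonneg _ _
  have hsub : sNum B (n + k) ≤ sNum (B + B') n + sNum B' (k + 1) := key_lower B B' k h1n
  have t1 : (C₀ - δ) / (1 + ε) ^ (1 / p) ≤ sNum B (n + k) * (n : ℝ) ^ (1 / p) := by
    rw [div_le_iff₀ hA1]
    calc C₀ - δ ≤ sNum B (n + k) * ((n + k : ℕ) : ℝ) ^ (1 / p) := hA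
      _ ≤ sNum B (n + k) * ((1 + ε) ^ (1 / p) * (n : ℝ) ^ (1 / p)) :=
          mul_le_mul_of_nonneg_left hr3 hs1
      _ = sNum B (n + k) * (n : ℝ) ^ (1 / p) * (1 + ε) ^ (1 / p) := by ring
  have t2 : sNum B' (k + 1) * (n : ℝ) ^ (1 / p) ≤ δ / ε ^ (1 / p) := by
    rw [le_div_iff₀ hB1]
    calc sNum B' (k + 1) * (n : ℝ) ^ (1 / p) * ε ^ (1 / p)
        = sNum B' (k + 1) * (ε ^ (1 / p) * (n : ℝ) ^ (1 / p)) := by ring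
      _ ≤ sNum B' (k + 1) * ((k + 1 : ℕ) : ℝ) ^ (1 / p) := mul_le_mul_of_nonneg_left hr2 hs2
      _ ≤ δ := hb
  have hmul : (sNum B (n + k) - sNum B' (k + 1)) * (n : ℝ) ^ (1 / p) ≤
      sNum (B + B') n * (n : ℝ) ^ (1 / p) :=
    mul_le_mul_of_nonneg_right (by linarith) (by positivity)
  nlinarith [hmul, t1, t2,
    (show (sNum B (n + k) - sNum B' (k + 1)) * (n : ℝ) ^ (1 / p) =
      sNum B (n + k) * (n : ℝ) ^ (1 / p) - sNum B' (k + 1) * (n : ℝ) ^ (1 / p) from by ring)]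


end Aux

/-- Weyl–Ky Fan theorem: if `s_j(B) j^{1/p} → C₀` and
`s_j(B') j^{1/p} → 0`, then `s_j(B + B') j^{1/p} → C₀`. -/
theorem statement1 {H H₁ : Type*}
    [NormedAddCommGroup H] [InnerProductSpace ℂ H] [CompleteSpace H]
    [NormedAddCommGroup H₁] [InnerProductSpace ℂ H₁] [CompleteSpace H₁]
    (p C₀ : ℝ) (hp : 0 < p) (hC₀ : 0 ≤ C₀)
    (B B' : H →L[ℂ] H₁)
    (hB : IsCompactOperator (B : H → H₁)) (hB' : IsCompactOperator (B' : H → H₁))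
    (h1 : Tendsto (fun j : ℕ => sNum B j * (j : ℝ) ^ (1 / p)) atTop (𝓝 C₀))
    (h2 : Tendsto (fun j : ℕ => sNum B' j * (j : ℝ) ^ (1 / p)) atTop (𝓝 0)) :
    Tendsto (fun j : ℕ => sNum (B + B') j * (j : ℝ) ^ (1 / p)) atTop (𝓝 C₀) := by
  have hp1 : (0 : ℝ) ≤ 1 / p := by positivity
  refine tendsto_order.2 ⟨?_, ?_⟩
  · -- lower bounds: ∀ c < C₀, eventually c < f n
    intro c hc
    rcases lt_or_ge c 0 with hc0 | hc0
    · exact Filter.Eventually.of_forall fun n =>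
        lt_of_lt_of_le hc0 (mul_nonneg (sNum_nonneg _ _) (Real.rpow_nonneg (Nat.cast_nonneg n) _))
    · have hC₀pos : 0 < C₀ := lt_of_le_of_lt hc0 hc
      set c' : ℝ := (c + C₀) / 2 with hc'def
      have hcc' : c < c' := by simp only [hc'def]; linarith
      have hc'C : c' < C₀ := by simp only [hc'def]; linarith
      -- choose ε
      have hcontpow : ContinuousAt (fun x : ℝ => x ^ (1 / p)) ((fun ε : ℝ => 1 + ε) 0) :=
        Real.continuousAt_rpow_const _ _ (Or.inr hp1)
      have hcont : ContinuousAt (fun ε : ℝ => (1 + ε) ^ (1 / p)) 0 :=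
        hcontpow.comp (continuousAt_const.add continuousAt_id)
      have hne : (fun ε : ℝ => (1 + ε) ^ (1 / p)) 0 ≠ 0 := by
        simp [Real.rpow_natCast, Real.one_rpow]
      have ht : Filter.Tendsto (fun ε : ℝ => C₀ / (1 + ε) ^ (1 / p)) (nhds 0)
          (nhds (C₀ / (1 + (0:ℝ)) ^ (1 / p))) :=
        (continuousAt_const.div hcont hne).tendsto
      have hval : C₀ / (1 + (0:ℝ)) ^ (1 / p) = C₀ := by
        norm_num [Real.one_rpow]
      rw [hval] at ht
      have hev : ∀ᶠ ε in nhds (0 : ℝ), c' < C₀ / (1 + ε) ^ (1 / p) :=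
        ht.eventually (eventually_gt_nhds hc'C)
      have hev2 : ∀ᶠ ε in nhds (0 : ℝ), (0 : ℝ) < ε → (0 : ℝ) < ε := by
        exact Filter.Eventually.of_forall fun _ h => h
      obtain ⟨ε, hεball, hε0⟩ := Filter.Eventually.exists
        ((hev.filter_mono nhdsWithin_le_nhds).and
          (eventually_mem_nhdsWithin (s := Set.Ioi (0:ℝ)) (a := 0)))
      have hεpos : 0 < ε := hε0
      have hεc' : c' < C₀ / (1 + ε) ^ (1 / p) := hεball
      -- choose δ
      set A : ℝ := (1 + ε) ^ (1 / p) with hAdef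
      set Bp : ℝ := ε ^ (1 / p) with hBdef
      have hApos : 0 < A := Real.rpow_pos_of_pos (by linarith) _
      have hBpos : 0 < Bp := Real.rpow_pos_of_pos hεpos _
      set S : ℝ := 1 / A + 1 / Bp with hSdef
      have hSpos : 0 < S := by positivity
      set δ : ℝ := (c' - c) / (S + 1) with hδdef
      have hδpos : 0 < δ := by
        apply div_pos (by linarith) (by linarith)
      have hδS : δ * (S + 1) = c' - c := by
        rw [hδdef]; field_simp
      have key : c < (C₀ - δ) / A - δ / Bp := by
        clear_value A Bp S δ
        have e1 : (C₀ - δ) / A = C₀ / A - δ / A := sub_div _ _ _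
        have e2 : δ / A + δ / Bp = δ * S := by rw [hSdef]; ring
        have e3 : δ * S = c' - c - δ := by linarith [hδS]
        have e4 : C₀ / A > c' := hεc'
        linarith
      filter_upwards [eventual_lower B B' hp h1 h2 hεpos hδpos] with n hn
      calc c < (C₀ - δ) / A - δ / Bp := key
        _ ≤ sNum (B + B') n * (n : ℝ) ^ (1 / p) := hn
  · -- upper bounds: ∀ c > C₀, eventually f n < c
    intro c hc
    set c' : ℝ := (c + C₀) / 2 with hc'def
    have hcc' : c' < c := by simp only [hc'def]; linarith
    have hc'C : C₀ < c' := by simp only [hc'def]; linarith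
    have hcontpow : ContinuousAt (fun x : ℝ => x ^ (1 / p)) ((fun ε : ℝ => 1 - ε) 0) :=
      Real.continuousAt_rpow_const _ _ (Or.inr hp1)
    have hcont : ContinuousAt (fun ε : ℝ => (1 - ε) ^ (1 / p)) 0 :=
      hcontpow.comp (continuousAt_const.sub continuousAt_id)
    have hne : (fun ε : ℝ => (1 - ε) ^ (1 / p)) 0 ≠ 0 := by
      simp [Real.one_rpow]
    have ht : Filter.Tendsto (fun ε : ℝ => C₀ / (1 - ε) ^ (1 / p)) (nhds 0)
        (nhds (C₀ / (1 - (0:ℝ)) ^ (1 / p))) :=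
      (continuousAt_const.div hcont hne).tendsto
    have hval : C₀ / (1 - (0:ℝ)) ^ (1 / p) = C₀ := by
      norm_num [Real.one_rpow]
    rw [hval] at ht
    have hev : ∀ᶠ ε in nhds (0 : ℝ), C₀ / (1 - ε) ^ (1 / p) < c' :=
      ht.eventually (eventually_lt_nhds hc'C)
    have hev1 : ∀ᶠ ε in nhds (0 : ℝ), ε < 1 := eventually_lt_nhds one_pos
    obtain ⟨ε, ⟨hεball, hεlt1⟩, hε0⟩ := Filter.Eventually.exists
      (((hev.and hev1).filter_mono nhdsWithin_le_nhds).and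
        (eventually_mem_nhdsWithin (s := Set.Ioi (0:ℝ)) (a := 0)))
    have hεpos : (0 : ℝ) < ε := hε0
    set A : ℝ := (1 - ε) ^ (1 / p) with hAdef
    set Bp : ℝ := ε ^ (1 / p) with hBdef
    have hApos : 0 < A := Real.rpow_pos_of_pos (by linarith) _
    have hBpos : 0 < Bp := Real.rpow_pos_of_pos hεpos _
    set S : ℝ := 1 / A + 1 / Bp with hSdef
    have hSpos : 0 < S := by positivity
    set δ : ℝ := (c - c') / (S + 1) with hδdef
    have hδpos : 0 < δ := div_pos (by linarith) (by linarith)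
    have hδS : δ * (S + 1) = c - c' := by rw [hδdef]; field_simp
    have key : (C₀ + δ) / A + δ / Bp < c := by
      clear_value A Bp S δ
      have e1 : (C₀ + δ) / A = C₀ / A + δ / A := add_div _ _ _
      have e2 : δ / A + δ / Bp = δ * S := by rw [hSdef]; ring
      have e3 : δ * S = c - c' - δ := by linarith [hδS]
      have e4 : C₀ / A < c' := hεball
      linarith
    filter_upwards [eventual_upper B B' hp h1 h2 hεpos hεlt1 hδpos] with n hn
    calc sNum (B + B') n * (n : ℝ) ^ (1 / p) ≤ (C₀ + δ) / A + δ / Bp := hn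
      _ < c := key
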